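/- (Refined Kearns–Saul inequality for p ≥ 1/2) For every p ∈ [1/2,1] and every t ≥ 0, one has (1−p)·exp(−t·p) + p·exp(t·(1−p)) ≤ exp( p·(1−p)·t²/2 ). -/

import Mathlib

lemma aux_sinh_le (x : ℝ) (hx : 0 ≤ x) : Real.sinh x ≤ x * Real.cosh x := by
  have key : ∀ y : ℝ, HasDerivAt (fun z => z * Real.cosh z - Real.sinh z)
      (y * Real.sinh y) y := by
    intro y
    have h := ((hasDerivAt_id y).mul (Real.hasDerivAt_cosh y)).sub (Real.hasDerivAt_sinh y)
    refine h.congr_deriv ?_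
    simp [id_eq]
  have mono : Monotone (fun z => z * Real.cosh z - Real.sinh z) := by
    apply monotone_of_deriv_nonneg (fun y => (key y).differentiableAt)
    intro y
    rw [(key y).deriv]
    rcases le_or_gt 0 y with h | h
    · exact mul_nonneg h (by rwa [← Real.sinh_nonneg_iff] at h)
    · nlinarith [mul_nonneg (neg_nonneg.2 h.le) (neg_nonneg.2 (Real.sinh_nonpos_iff.2 h.le))]
  have h0 := mono hx
  simpa using h0

lemma key_ineq (p t : ℝ) (hp0 : 1/2 ≤ p) (hp1 : p ≤ 1) (ht : 0 ≤ t) :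
    Real.exp (t * (1 - p)) - Real.exp (-t * p) ≤
      t * Real.exp (p * (1 - p) * t ^ 2 / 2) := by
  have hq : 0 ≤ 1 - p := by linarith
  rcases le_or_gt (p * t) 2 with hc | hc
  · -- small t case
    have e1 : Real.exp (t / 2) * Real.exp (t / 2) = Real.exp t := by
      rw [← Real.exp_add]; ring_nf
    have e2 : Real.exp (t / 2) * Real.exp (-(t / 2)) = 1 := by
      rw [← Real.exp_add, show t / 2 + -(t / 2) = 0 by ring, Real.exp_zero]
    have h2 : Real.exp t - 1 = 2 * Real.exp (t / 2) * Real.sinh (t / 2) := by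
      rw [Real.sinh_eq]
      linear_combination e2 - e1
    have hsinh : Real.sinh (t / 2) ≤ (t / 2) * Real.exp (t ^ 2 / 8) := by
      calc Real.sinh (t / 2) ≤ (t / 2) * Real.cosh (t / 2) :=
            aux_sinh_le _ (by linarith)
        _ ≤ (t / 2) * Real.exp (t ^ 2 / 8) := by
            apply mul_le_mul_of_nonneg_left _ (by linarith)
            have := Real.cosh_le_exp_half_sq (t / 2)
            rw [show t ^ 2 / 8 = (t / 2) ^ 2 / 2 by ring]
            exact this
    have hE : Real.exp t - 1 ≤ t * Real.exp (t / 2 + t ^ 2 / 8) := by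
      rw [h2, Real.exp_add]
      have := mul_le_mul_of_nonneg_left hsinh
        (le_of_lt (by positivity : (0:ℝ) < 2 * Real.exp (t / 2)))
      calc 2 * Real.exp (t / 2) * Real.sinh (t / 2)
          ≤ 2 * Real.exp (t / 2) * ((t / 2) * Real.exp (t ^ 2 / 8)) := this
        _ = t * (Real.exp (t / 2) * Real.exp (t ^ 2 / 8)) := by ring
    have h1 : Real.exp (t * (1 - p)) - Real.exp (-t * p)
        = Real.exp (-t * p) * (Real.exp t - 1) := by
      rw [show t * (1 - p) = -t * p + t by ring, Real.exp_add]
      ring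
    have hexp : -t * p + (t / 2 + t ^ 2 / 8) ≤ p * (1 - p) * t ^ 2 / 2 := by
      have h2p1 : 0 ≤ 2 * p - 1 := by linarith
      have h4 : t * (2 * p - 1) ≤ 2 := by nlinarith
      nlinarith [mul_nonneg (mul_nonneg ht h2p1) (by linarith : (0:ℝ) ≤ 4 - t * (2 * p - 1))]
    calc Real.exp (t * (1 - p)) - Real.exp (-t * p)
        = Real.exp (-t * p) * (Real.exp t - 1) := h1
      _ ≤ Real.exp (-t * p) * (t * Real.exp (t / 2 + t ^ 2 / 8)) :=
          mul_le_mul_of_nonneg_left hE (Real.exp_pos _).le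
      _ = t * Real.exp (-t * p + (t / 2 + t ^ 2 / 8)) := by
          simp only [Real.exp_add]; ring
      _ ≤ t * Real.exp (p * (1 - p) * t ^ 2 / 2) :=
          mul_le_mul_of_nonneg_left (Real.exp_le_exp.2 hexp) ht
  · -- large t case: p * t > 2, so t ≥ 2
    have ht2 : 2 ≤ t := by nlinarith
    have hexp : t * (1 - p) ≤ p * (1 - p) * t ^ 2 / 2 := by
      nlinarith [mul_nonneg (mul_nonneg hq ht) (by linarith : (0:ℝ) ≤ p * t - 2)]
    calc Real.exp (t * (1 - p)) - Real.exp (-t * p)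
        ≤ Real.exp (t * (1 - p)) := by linarith [Real.exp_pos (-t * p)]
      _ ≤ Real.exp (p * (1 - p) * t ^ 2 / 2) := Real.exp_le_exp.2 hexp
      _ ≤ t * Real.exp (p * (1 - p) * t ^ 2 / 2) :=
          le_mul_of_one_le_left (Real.exp_pos _).le (by linarith)

/-- Refined Kearns–Saul inequality: for `p ∈ [1/2,1]` and `t ≥ 0`,
`(1-p)e^{-tp} + p e^{t(1-p)} ≤ exp(p(1-p)t²/2)`. -/
theorem kearns_saul_refined (p t : ℝ) (hp0 : 1/2 ≤ p) (hp1 : p ≤ 1) (ht : 0 ≤ t) :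
    (1 - p) * Real.exp (-t * p) + p * Real.exp (t * (1 - p)) ≤
      Real.exp (p * (1 - p) * t^2 / 2) := by
  set F : ℝ → ℝ := fun z =>
    Real.exp (p * (1 - p) * z ^ 2 / 2) -
      ((1 - p) * Real.exp (-z * p) + p * Real.exp (z * (1 - p))) with hF
  have hderiv : ∀ z : ℝ, HasDerivAt F
      (p * (1 - p) * z * Real.exp (p * (1 - p) * z ^ 2 / 2) +
        (1 - p) * p * Real.exp (-z * p) -
        p * (1 - p) * Real.exp (z * (1 - p))) z := by
    intro z
    have h1 : HasDerivAt (fun w : ℝ => p * (1 - p) * w ^ 2 / 2) (p * (1 - p) * z) z := by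
      have := ((hasDerivAt_pow 2 z).const_mul (p * (1 - p))).div_const 2
      refine this.congr_deriv ?_
      push_cast
      ring
    have h1e := h1.exp
    have h2 : HasDerivAt (fun w : ℝ => -w * p) (-p) z := by
      have := ((hasDerivAt_id z).neg.mul_const p)
      refine this.congr_deriv ?_
      ring
    have h2e := (h2.exp.const_mul (1 - p))
    have h3 : HasDerivAt (fun w : ℝ => w * (1 - p)) (1 - p) z := by
      have := (hasDerivAt_id z).mul_const (1 - p)
      refine this.congr_deriv ?_
      ring
    have h3e := (h3.exp.const_mul p)
    have := h1e.sub (h2e.add h3e)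
    refine this.congr_deriv ?_
    ring
  have hmono : MonotoneOn F (Set.Ici (0 : ℝ)) := by
    apply monotoneOn_of_deriv_nonneg (convex_Ici 0)
    · exact (fun z _ => ((hderiv z).differentiableAt).continuousAt.continuousWithinAt)
    · exact fun z _ => ((hderiv z).differentiableAt).differentiableWithinAt
    · intro z hz
      rw [interior_Ici] at hz
      rw [(hderiv z).deriv]
      have hz0 : 0 ≤ z := le_of_lt hz
      have hkey := key_ineq p z hp0 hp1 hz0
      have hpq : 0 ≤ p * (1 - p) := by nlinarith
      nlinarith [mul_le_mul_of_nonneg_left hkey hpq]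
  have h0 : F 0 = 0 := by simp [hF]
  have hFt := hmono (Set.self_mem_Ici) (Set.mem_Ici.2 ht) ht
  rw [h0] at hFt
  simp only [hF] at hFt
  linarith
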